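/- Let A be an m×m real matrix, W an m×d real matrix, b ∈ ℝ^m, and define the network coherency regularization l_c(L) = ‖W − A W‖ + ‖b − A b‖, where the matrix norm is the ℓ²→ℓ² operator norm and vector norms are Euclidean. Let z be a random vector in ℝ^d whose coordinates are independent standard Gaussian random variables (mean 0, variance 1), modeling the batch-normalized output of the second-to-last layer, and let ŷ = W z + b. Then for every δ ≥ 1, with d ≥ 1, P( c(ŷ) ≤ δ · l_c(L) ) ≥ 1 − 4 · exp(−δ² / (8 d²)), where c(ŷ) = ‖ŷ − A ŷ‖. -/

import Mathlib

open MeasureTheory ProbabilityTheory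
open scoped Matrix Matrix.Norms.L2Operator
open Real Set
open scoped ENNReal NNReal

lemma my_exp_int {t : ℝ} (ht : 0 < t) :
    ∫ x in Ioi t, Real.exp (-(t * x)) = t⁻¹ * Real.exp (-(t * t)) := by
  have := integral_comp_mul_left_Ioi (fun y => Real.exp (-y)) t ht
  rw [integral_exp_neg_Ioi] at this; simpa [smul_eq_mul] using this
lemma gauss_tail_Ioi {t : ℝ} (ht : 1 ≤ t) :
    gaussianReal 0 1 (Ioi t) ≤ ENNReal.ofReal (Real.exp (-t ^ 2 / 2)) := by
  have ht0 : 0 < t := by linarith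
  rw [gaussianReal_apply_eq_integral 0 one_ne_zero]
  apply ENNReal.ofReal_le_ofReal
  have h1 : ∫ x in Ioi t, gaussianPDFReal 0 1 x ≤
      ∫ x in Ioi t, Real.exp (t ^ 2 / 2) * Real.exp (-(t * x)) := by
    apply setIntegral_mono_on
    · exact (integrable_gaussianPDFReal 0 1).integrableOn
    · have : IntegrableOn (fun x : ℝ => Real.exp (-t * x)) (Ioi t) :=
        exp_neg_integrableOn_Ioi t ht0
      simpa [neg_mul, IntegrableOn] using this.const_mul (Real.exp (t ^ 2 / 2))
    · exact measurableSet_Ioi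
    · intro x _
      unfold gaussianPDFReal
      rw [← Real.exp_add]
      have h2 : (Real.sqrt (2 * π * (1:NNReal)))⁻¹ ≤ 1 := by
        rw [NNReal.coe_one, mul_one]
        rw [inv_le_one_iff₀]
        right
        rw [Real.one_le_sqrt]
        nlinarith [Real.pi_gt_three]
      have h3 : Real.exp (-(x - 0) ^ 2 / (2 * (1:NNReal))) ≤ Real.exp (t ^ 2 / 2 + -(t * x)) := by
        apply Real.exp_le_exp.2
        push_cast
        nlinarith [sq_nonneg (x - t)]
      calc (Real.sqrt (2 * π * (1:NNReal)))⁻¹ * Real.exp (-(x - 0) ^ 2 / (2 * (1:NNReal)))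
          ≤ 1 * Real.exp (t ^ 2 / 2 + -(t * x)) := by
            apply mul_le_mul h2 h3 (Real.exp_pos _).le one_pos.le
        _ = Real.exp (t ^ 2 / 2 + -(t * x)) := one_mul _
  rw [integral_const_mul, my_exp_int ht0] at h1
  refine h1.trans ?_
  calc Real.exp (t^2/2) * (t⁻¹ * Real.exp (-(t*t)))
      = t⁻¹ * Real.exp (t^2/2 + -(t*t)) := by rw [Real.exp_add]; ring
    _ ≤ 1 * Real.exp (t^2/2 + -(t*t)) := by
        apply mul_le_mul_of_nonneg_right _ (Real.exp_pos _).le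
        exact inv_le_one_of_one_le₀ ht
    _ = Real.exp (-t^2/2) := by rw [one_mul]; congr 1; ring

lemma gauss_tail_abs {t : ℝ} (ht : 1 ≤ t) :
    gaussianReal 0 1 {x : ℝ | t < |x|} ≤ ENNReal.ofReal (2 * Real.exp (-t ^ 2 / 2)) := by
  have hmap : (gaussianReal 0 1).map ((-1 : ℝ) * ·) = gaussianReal 0 1 := by
    rw [gaussianReal_map_const_mul]
    norm_num
  have hIio : gaussianReal 0 1 (Iio (-t)) = gaussianReal 0 1 (Ioi t) := by
    calc gaussianReal 0 1 (Iio (-t))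
        = ((gaussianReal 0 1).map ((-1 : ℝ) * ·)) (Iio (-t)) := by rw [hmap]
      _ = gaussianReal 0 1 (((-1 : ℝ) * ·) ⁻¹' (Iio (-t))) :=
          Measure.map_apply (measurable_const_mul _) measurableSet_Iio
      _ = gaussianReal 0 1 (Ioi t) := by
          congr 1
          ext x
          simp only [mem_preimage, mem_Iio, mem_Ioi]
          constructor <;> intro h <;> nlinarith
  have hsub : {x : ℝ | t < |x|} ⊆ Iio (-t) ∪ Ioi t := by
    intro x hx
    simp only [mem_setOf_eq] at hx
    rcases abs_cases x with ⟨h1, _⟩ | ⟨h1, _⟩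
    · right; exact mem_Ioi.2 (by linarith)
    · left; exact mem_Iio.2 (by linarith)
  calc gaussianReal 0 1 {x : ℝ | t < |x|} ≤ gaussianReal 0 1 (Iio (-t) ∪ Ioi t) :=
        measure_mono hsub
    _ ≤ gaussianReal 0 1 (Iio (-t)) + gaussianReal 0 1 (Ioi t) := measure_union_le _ _
    _ = gaussianReal 0 1 (Ioi t) + gaussianReal 0 1 (Ioi t) := by rw [hIio]
    _ ≤ ENNReal.ofReal (Real.exp (-t ^ 2 / 2)) + ENNReal.ofReal (Real.exp (-t ^ 2 / 2)) :=
        add_le_add (gauss_tail_Ioi ht) (gauss_tail_Ioi ht)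
    _ = ENNReal.ofReal (2 * Real.exp (-t ^ 2 / 2)) := by
        rw [← ENNReal.ofReal_add (Real.exp_pos _).le (Real.exp_pos _).le]; ring_nf

set_option maxHeartbeats 1000000

/-- Proposition 1: if the batch-normalized second-to-last layer output `z` is a random
vector in `ℝ^d` with independent standard Gaussian coordinates and the network outputs
`ŷ = W z + b`, then for every `δ ≥ 1` (with `d ≥ 1`), the coherency
`c(ŷ) = ‖ŷ - A ŷ‖` satisfies `c(ŷ) ≤ δ · l_c(L)` with probability at least
`1 - 4 exp(-δ² / (8 d²))`, where `l_c(L) = ‖W - A W‖ + ‖b - A b‖`. -/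
theorem coherency_prob_bound {Ω : Type*} [MeasurableSpace Ω]
    (μ : Measure Ω) [IsProbabilityMeasure μ] {m d : ℕ} (hd : 1 ≤ d)
    (A : Matrix (Fin m) (Fin m) ℝ) (W : Matrix (Fin m) (Fin d) ℝ)
    (b : EuclideanSpace ℝ (Fin m))
    (z : Ω → EuclideanSpace ℝ (Fin d))
    (hmeas : ∀ i, Measurable fun ω => z ω i)
    (hindep : iIndepFun (fun i ω => z ω i) μ)
    (hgauss : ∀ i, μ.map (fun ω => z ω i) = gaussianReal 0 1)
    (δ : ℝ) (hδ : 1 ≤ δ) :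
    1 - ENNReal.ofReal (4 * Real.exp (-δ ^ 2 / (8 * d ^ 2))) ≤
      μ {ω |
        ‖((EuclideanSpace.equiv (Fin m) ℝ).symm (W *ᵥ z ω) + b) -
            (EuclideanSpace.equiv (Fin m) ℝ).symm
              (A *ᵥ ((EuclideanSpace.equiv (Fin m) ℝ).symm (W *ᵥ z ω) + b))‖ ≤
          δ * (‖W - A * W‖ + ‖b - (EuclideanSpace.equiv (Fin m) ℝ).symm (A *ᵥ b)‖)} := by
  set E := Real.exp (-δ ^ 2 / (8 * d ^ 2)) with hE
  by_cases h4 : 1 ≤ 4 * E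
  · have h1 : (1 : ℝ≥0∞) ≤ ENNReal.ofReal (4 * E) := by
      rw [show (1:ℝ≥0∞) = ENNReal.ofReal 1 by simp]
      exact ENNReal.ofReal_le_ofReal h4
    rw [tsub_eq_zero_of_le h1]
    exact zero_le
  push_neg at h4
  have hd0 : (0:ℝ) < d := by exact_mod_cast hd
  have hd1 : (1:ℝ) ≤ d := by exact_mod_cast hd
  have hδ0 : (0:ℝ) < δ := by linarith
  -- from h4 : δ^2 ≥ 8 d^2
  have hlog : Real.log 4 < δ ^ 2 / (8 * (d:ℝ) ^ 2) := by
    have h5 : E < 4⁻¹ := by linarith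
    have h6 := Real.log_lt_log (Real.exp_pos (-δ ^ 2 / (8 * (d:ℝ) ^ 2))) h5
    rw [Real.log_exp, Real.log_inv] at h6
    have h7 : -δ ^ 2 / (8 * (d:ℝ) ^ 2) = -(δ ^ 2 / (8 * (d:ℝ)^2)) := by ring
    rw [h7] at h6
    linarith
  have hlog4 : (1:ℝ) ≤ Real.log 4 := by
    rw [Real.le_log_iff_exp_le (by norm_num)]
    have := Real.exp_one_lt_d9
    linarith
  have hδ2 : 8 * (d:ℝ)^2 ≤ δ ^ 2 := by
    have h7 : (1:ℝ) < δ^2/(8*(d:ℝ)^2) := lt_of_le_of_lt hlog4 hlog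
    rw [lt_div_iff₀ (by positivity)] at h7
    linarith
  set s := δ / Real.sqrt d with hs
  have hsqd_pos : 0 < Real.sqrt d := Real.sqrt_pos.2 hd0
  have hs2 : s ^ 2 = δ^2 / d := by rw [hs, div_pow, Real.sq_sqrt hd0.le]
  have hs0 : 0 ≤ s := div_nonneg hδ0.le hsqd_pos.le
  have hs1 : 1 ≤ s := by
    have h1 : 1 ≤ s^2 := by
      rw [hs2, le_div_iff₀ hd0]; nlinarith
    nlinarith
  -- good sets
  set G : Fin d → Set Ω := fun i => {ω | |z ω i| ≤ s} with hG
  have hGmeas : ∀ i, MeasurableSet (G i) := by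
    intro i
    have : G i = (fun ω => z ω i) ⁻¹' {x : ℝ | |x| ≤ s} := rfl
    rw [this]
    exact (hmeas i) (measurableSet_le measurable_abs measurable_const)
  have hGc : ∀ i, μ ((G i)ᶜ) ≤ ENNReal.ofReal (2 * Real.exp (-s ^ 2 / 2)) := by
    intro i
    have hset : MeasurableSet {x : ℝ | s < |x|} :=
      measurableSet_lt measurable_const measurable_abs
    have h8 : (G i)ᶜ = (fun ω => z ω i) ⁻¹' {x : ℝ | s < |x|} := by
      ext ω; simp [hG, not_le]
    rw [h8, ← Measure.map_apply (hmeas i) hset, hgauss i]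
    exact gauss_tail_abs hs1
  have hSm : MeasurableSet (⋂ i, G i) := MeasurableSet.iInter hGmeas
  -- real arithmetic
  have hreal : (d:ℝ) * (2 * Real.exp (-s ^ 2 / 2)) ≤ 4 * E := by
    set a := δ^2/(2*(d:ℝ)) with ha
    set bb := δ^2/(8*(d:ℝ)^2) with hbb
    have hsa : -s ^ 2 / 2 = -a := by rw [hs2, ha]; ring
    have hEb : E = Real.exp (-bb) := by rw [hE, hbb]; ring_nf
    have hab : 3*(d:ℝ) ≤ a - bb := by
      have e1 : a - bb = (δ^2 * (4*(d:ℝ) - 1))/(8*(d:ℝ)^2) := by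
        rw [ha, hbb]; field_simp; ring
      rw [e1, le_div_iff₀ (by positivity)]
      nlinarith [mul_le_mul_of_nonneg_right hδ2 (show (0:ℝ) ≤ 4*(d:ℝ)-1 by linarith)]
    have hd2 : (d:ℝ) ≤ 2 * Real.exp (a - bb) := by
      have := Real.add_one_le_exp (a - bb)
      linarith
    have h6 : (d:ℝ) * Real.exp (bb - a) ≤ 2 := by
      calc (d:ℝ) * Real.exp (bb - a)
          ≤ (2 * Real.exp (a - bb)) * Real.exp (bb - a) :=
            mul_le_mul_of_nonneg_right hd2 (Real.exp_pos _).le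
        _ = 2 := by rw [mul_assoc, ← Real.exp_add]; simp
    have hsplit : Real.exp (-a) = Real.exp (-bb) * Real.exp (bb - a) := by
      rw [← Real.exp_add]; ring_nf
    rw [hsa, hEb, hsplit]
    nlinarith [h6, Real.exp_pos (-bb), mul_le_mul_of_nonneg_left h6 (le_of_lt (mul_pos two_pos (Real.exp_pos (-bb))))]
  -- inclusion
  have hincl : (⋂ i, G i) ⊆ {ω |
        ‖((EuclideanSpace.equiv (Fin m) ℝ).symm (W *ᵥ z ω) + b) -
            (EuclideanSpace.equiv (Fin m) ℝ).symm
              (A *ᵥ ((EuclideanSpace.equiv (Fin m) ℝ).symm (W *ᵥ z ω) + b))‖ ≤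
          δ * (‖W - A * W‖ + ‖b - (EuclideanSpace.equiv (Fin m) ℝ).symm (A *ᵥ b)‖)} := by
    intro ω hω
    rw [Set.mem_iInter] at hω
    have hzb : ∀ i, |z ω i| ≤ s := fun i => hω i
    have hz : ‖z ω‖ ≤ δ := by
      rw [EuclideanSpace.norm_eq]
      have hsum : ∑ i, ‖z ω i‖^2 ≤ δ^2 := by
        calc ∑ i, ‖z ω i‖^2 ≤ ∑ _i : Fin d, s^2 := by
              apply Finset.sum_le_sum
              intro i _
              rw [Real.norm_eq_abs]
              exact pow_le_pow_left₀ (abs_nonneg _) (hzb i) 2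
          _ = (d:ℝ) * s^2 := by
              rw [Finset.sum_const, Finset.card_univ, Fintype.card_fin, nsmul_eq_mul]
          _ = δ^2 := by rw [hs2]; field_simp
      calc Real.sqrt (∑ i, ‖z ω i‖^2) ≤ Real.sqrt (δ^2) := Real.sqrt_le_sqrt hsum
        _ = δ := Real.sqrt_sq hδ0.le
    simp only [Set.mem_setOf_eq]
    have hmv : A *ᵥ ((EuclideanSpace.equiv (Fin m) ℝ).symm (W *ᵥ z ω) + b)
        = A *ᵥ (W *ᵥ z ω) + A *ᵥ b := by
      funext j
      simp [Matrix.mulVec, dotProduct, mul_add, Finset.sum_add_distrib]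
      simp only [Matrix.mul_apply, Finset.sum_mul, Finset.mul_sum]
      rw [Finset.sum_comm]
      simp [mul_assoc]
    rw [hmv]
    set e := EuclideanSpace.equiv (Fin m) ℝ with he
    have h1 : e.symm (A *ᵥ (W *ᵥ z ω) + A *ᵥ b) = e.symm (A *ᵥ (W *ᵥ z ω)) + e.symm (A *ᵥ b) :=
      map_add _ _ _
    have h2 : e.symm ((W - A * W) *ᵥ z ω) = e.symm (W *ᵥ z ω) - e.symm (A *ᵥ (W *ᵥ z ω)) := by
      rw [Matrix.sub_mulVec, ← Matrix.mulVec_mulVec]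
      exact map_sub _ _ _
    have hkey : (e.symm (W *ᵥ z ω) + b) - e.symm (A *ᵥ (W *ᵥ z ω) + A *ᵥ b)
        = e.symm ((W - A * W) *ᵥ z ω) + (b - e.symm (A *ᵥ b)) := by
      rw [h1, h2]; abel
    rw [hkey]
    calc ‖e.symm ((W - A * W) *ᵥ z ω) + (b - e.symm (A *ᵥ b))‖
        ≤ ‖e.symm ((W - A * W) *ᵥ z ω)‖ + ‖b - e.symm (A *ᵥ b)‖ := norm_add_le _ _
      _ ≤ ‖W - A * W‖ * ‖z ω‖ + ‖b - e.symm (A *ᵥ b)‖ :=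
          add_le_add_left (Matrix.l2_opNorm_mulVec (W - A * W) (z ω)) _
      _ ≤ δ * (‖W - A * W‖ + ‖b - e.symm (A *ᵥ b)‖) := by
          nlinarith [norm_nonneg (W - A * W), norm_nonneg (b - e.symm (A *ᵥ b)),
            mul_le_mul_of_nonneg_left hz (norm_nonneg (W - A * W))]
  -- conclude
  have hcompl : μ ((⋂ i, G i)ᶜ) ≤ ENNReal.ofReal (4 * E) := by
    rw [Set.compl_iInter]
    refine le_trans (measure_iUnion_fintype_le μ _) ?_
    calc ∑ i, μ ((G i)ᶜ) ≤ ∑ _i : Fin d, ENNReal.ofReal (2 * Real.exp (-s^2/2)) :=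
          Finset.sum_le_sum (fun i _ => hGc i)
      _ = (d:ℝ≥0∞) * ENNReal.ofReal (2 * Real.exp (-s^2/2)) := by
          rw [Finset.sum_const, Finset.card_univ, Fintype.card_fin, nsmul_eq_mul]
      _ = ENNReal.ofReal ((d:ℝ) * (2 * Real.exp (-s^2/2))) := by
          rw [← ENNReal.ofReal_natCast d, ← ENNReal.ofReal_mul (by positivity)]
      _ ≤ ENNReal.ofReal (4 * E) := ENNReal.ofReal_le_ofReal hreal
  have hprob := prob_add_prob_compl (μ := μ) hSm
  calc 1 - ENNReal.ofReal (4 * E) ≤ μ (⋂ i, G i) := by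
        rw [tsub_le_iff_right, ← hprob]
        exact add_le_add_right hcompl _
    _ ≤ _ := measure_mono hincl
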